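/- arXiv:2603.10386 — 2 statements merged into one kernel-verified Lean document; each statement's English description precedes it below -/
import Mathlib

section
/- (Theorem 4.6(4)) Under the hypotheses of the two hyperelliptic flows, the branch α_a of al_a satisfies ∂_t α_a = [ (1/2) ∂_s (x_1 + ⋯ + x_g) − ((x_1 + ⋯ + x_g) − b_a) ψ_a ] · α_a on U. -/
open Finset

noncomputable def alFd (g : ℕ) (x : Fin g → ℂ × ℂ → ℂ) (i : Fin g) (p : ℂ × ℂ) : ℂ :=
  ∏ j ∈ Finset.univ.erase i, (x i p - x j p)

noncomputable def alPsi (g : ℕ) (x y : Fin g → ℂ × ℂ → ℂ) (ba : ℂ) (p : ℂ × ℂ) : ℂ :=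
  ∑ i : Fin g, y i p / (alFd g x i p * (x i p - ba))

noncomputable def dS (F : ℂ × ℂ → ℂ) (p : ℂ × ℂ) : ℂ :=
  deriv (fun z => F (p.1, z)) p.2

noncomputable def dT (F : ℂ × ℂ → ℂ) (p : ℂ × ℂ) : ℂ :=
  deriv (fun z => F (z, p.2)) p.1

theorem stmt5
    (g : ℕ) (hg : 2 ≤ g)
    (b : Fin (2 * g + 1) → ℂ) (hb : Function.Injective b)
    (U : Set (ℂ × ℂ)) (hU : IsOpen U) (hUne : U.Nonempty)
    (x y : Fin g → ℂ × ℂ → ℂ)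
    (hx : ∀ i, DifferentiableOn ℂ (x i) U)
    (hy : ∀ i, DifferentiableOn ℂ (y i) U)
    (hdist : ∀ p ∈ U, ∀ i j, i ≠ j → x i p ≠ x j p)
    (hy2 : ∀ p ∈ U, ∀ i, (y i p) ^ 2 = ∏ j, (x i p - b j))
    (hyne : ∀ p ∈ U, ∀ i, y i p ≠ 0)
    (hflowS : ∀ p ∈ U, ∀ i, dS (x i) p = 2 * y i p / alFd g x i p)
    (hflowT : ∀ p ∈ U, ∀ i,
      dT (x i) p = 2 * y i p * (-∑ j ∈ Finset.univ.erase i, x j p) / alFd g x i p)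
    (a : Fin (2 * g + 1))
    (hxa : ∀ p ∈ U, ∀ i, x i p ≠ b a)
    (α : ℂ × ℂ → ℂ) (hα : DifferentiableOn ℂ α U)
    (hαne : ∀ p ∈ U, α p ≠ 0)
    (hα2 : ∀ p ∈ U, (α p) ^ 2 = ∏ i : Fin g, (x i p - b a))
 :
    ∀ p ∈ U,
      dT α p
        = ((1 / 2) * dS (fun q => ∑ i : Fin g, x i q) p
            - ((∑ i : Fin g, x i p) - b a) * alPsi g x y (b a) p) * α p := by
  intro p hp
  have h2 : (2 : ℂ) ≠ 0 := two_ne_zero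
  have hαp := hαne p hp
  -- nonvanishing facts
  have hFd : ∀ i, alFd g x i p ≠ 0 := by
    intro i
    apply Finset.prod_ne_zero_iff.mpr
    intro j hj
    exact sub_ne_zero_of_ne (hdist p hp i j (Ne.symm (Finset.ne_of_mem_erase hj)))
  have hxab : ∀ i, x i p - b a ≠ 0 := fun i => sub_ne_zero_of_ne (hxa p hp i)
  -- slice differentiability helpers
  have hdaT : ∀ F : ℂ × ℂ → ℂ, DifferentiableOn ℂ F U →
      DifferentiableAt ℂ (fun z => F (z, p.2)) p.1 := by
    intro F hF
    have h1 : DifferentiableAt ℂ F p := hF.differentiableAt (hU.mem_nhds hp)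
    have h2' : DifferentiableAt ℂ (fun z : ℂ => ((z, p.2) : ℂ × ℂ)) p.1 :=
      differentiableAt_id.prodMk (differentiableAt_const _)
    have h1' : DifferentiableAt ℂ F ((p.1, p.2) : ℂ × ℂ) := by rw [Prod.mk.eta]; exact h1
    exact h1'.comp p.1 h2'
  have hdaS : ∀ F : ℂ × ℂ → ℂ, DifferentiableOn ℂ F U →
      DifferentiableAt ℂ (fun z => F (p.1, z)) p.2 := by
    intro F hF
    have h1 : DifferentiableAt ℂ F p := hF.differentiableAt (hU.mem_nhds hp)
    have h2' : DifferentiableAt ℂ (fun z : ℂ => ((p.1, z) : ℂ × ℂ)) p.2 :=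
      (differentiableAt_const _).prodMk differentiableAt_id
    have h1' : DifferentiableAt ℂ F ((p.1, p.2) : ℂ × ℂ) := by rw [Prod.mk.eta]; exact h1
    exact h1'.comp p.2 h2'
  have hTα : HasDerivAt (fun z => α (z, p.2)) (dT α p) p.1 := (hdaT α hα).hasDerivAt
  have hTx : ∀ i, HasDerivAt (fun z => x i (z, p.2)) (dT (x i) p) p.1 :=
    fun i => (hdaT (x i) (hx i)).hasDerivAt
  have hSx : ∀ i, HasDerivAt (fun z => x i (p.1, z)) (dS (x i) p) p.2 :=
    fun i => (hdaS (x i) (hx i)).hasDerivAt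
  -- derivative of α² slice
  have hTα2 : HasDerivAt (fun z => (α (z, p.2)) ^ 2) (2 * α p * dT α p) p.1 := by
    have := hTα.fun_pow 2
    simpa [Prod.mk.eta, mul_comm, mul_assoc, mul_left_comm] using this
  -- derivative of the product slice
  have hProd : HasDerivAt (fun z => ∏ i : Fin g, (x i (z, p.2) - b a))
      (∑ i : Fin g, (∏ j ∈ Finset.univ.erase i, (x j p - b a)) * dT (x i) p) p.1 := by
    have h := HasDerivAt.fun_finsetProd
      (u := (Finset.univ : Finset (Fin g)))
      (f := fun i z => x i (z, p.2) - b a)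
      (f' := fun i => dT (x i) p)
      (fun i _ => (hTx i).sub_const (b a))
    simpa [Prod.mk.eta, smul_eq_mul] using h
  -- the two slices agree near p.1
  have hEV : (fun z => (α (z, p.2)) ^ 2) =ᶠ[nhds p.1]
      (fun z => ∏ i : Fin g, (x i (z, p.2) - b a)) := by
    have hc : ContinuousAt (fun z : ℂ => (z, p.2)) p.1 :=
      (continuous_id.prodMk continuous_const).continuousAt
    have hmem : ∀ᶠ z in nhds p.1, (z, p.2) ∈ U := by
      have : U ∈ nhds ((p.1, p.2) : ℂ × ℂ) := by
        rw [Prod.mk.eta]; exact hU.mem_nhds hp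
      exact hc this
    filter_upwards [hmem] with z hz
    exact hα2 _ hz
  have hTα2' : HasDerivAt (fun z => (α (z, p.2)) ^ 2)
      (∑ i : Fin g, (∏ j ∈ Finset.univ.erase i, (x j p - b a)) * dT (x i) p) p.1 :=
    hProd.congr_of_eventuallyEq hEV
  have key : 2 * α p * dT α p
      = ∑ i : Fin g, (∏ j ∈ Finset.univ.erase i, (x j p - b a)) * dT (x i) p :=
    hTα2.unique hTα2'
  -- dS of the sum
  have hSsum : dS (fun q => ∑ i : Fin g, x i q) p = ∑ i : Fin g, dS (x i) p := by
    have h := HasDerivAt.fun_sum (u := (Finset.univ : Finset (Fin g)))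
      (A := fun i z => x i (p.1, z)) (A' := fun i => dS (x i) p)
      (fun i _ => hSx i)
    exact h.deriv
  -- notation
  set S := ∑ i : Fin g, x i p with hS
  set Q := ∏ i : Fin g, (x i p - b a) with hQdef
  -- termwise identity
  have hterm : ∀ i : Fin g,
      (∏ j ∈ Finset.univ.erase i, (x j p - b a)) * dT (x i) p
        = Q * dS (x i) p
          - (2 * Q * (S - b a)) * (y i p / (alFd g x i p * (x i p - b a))) := by
    intro i
    have hQ : (∏ j ∈ Finset.univ.erase i, (x j p - b a)) * (x i p - b a) = Q :=
      Finset.prod_erase_mul Finset.univ _ (Finset.mem_univ i)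
    have hs : (∑ j ∈ Finset.univ.erase i, x j p) = S - x i p := by
      rw [hS, ← Finset.add_sum_erase Finset.univ (fun j => x j p) (Finset.mem_univ i)]
      ring
    rw [hflowT p hp i, hflowS p hp i, hs, ← hQ]
    field_simp [hFd i, hxab i]
    ring
  -- assemble
  have key2 : ∑ i : Fin g, (∏ j ∈ Finset.univ.erase i, (x j p - b a)) * dT (x i) p
      = Q * (∑ i : Fin g, dS (x i) p)
        - (2 * Q * (S - b a)) * alPsi g x y (b a) p := by
    rw [Finset.sum_congr rfl (fun i _ => hterm i), Finset.sum_sub_distrib,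
      ← Finset.mul_sum, ← Finset.mul_sum]
    rfl
  have hQα : Q = (α p) ^ 2 := (hα2 p hp).symm
  apply mul_left_cancel₀ (mul_ne_zero h2 hαp)
  rw [key, key2, hSsum, hQα]
  ring
end

section
/- (Theorem 5.7(2), with the index typo of the paper corrected: the cubic coefficient involves ψ_1, not ψ_2) Under the hypotheses of the two hyperelliptic flows with the two branch indices a = 1, 2, the ratio R := α_2/α_1 satisfies 4 ∂_t R − [ 2 λ_{2g} + 3 (b_1 + b_2) ] ∂_s R + 6 ψ_1^2 ∂_s R − ∂_s^3 R + 6 (b_1 − b_2) ψ_1 R = 0 on U. -/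
open Finset

open Polynomial

lemma sliceS_diffAt {F : ℂ × ℂ → ℂ} {p : ℂ × ℂ} (h : DifferentiableAt ℂ F p) :
    DifferentiableAt ℂ (fun z => F (p.1, z)) p.2 := by
  have h2 : DifferentiableAt ℂ (fun z : ℂ => ((p.1 : ℂ), z)) p.2 :=
    (differentiableAt_const _).prodMk differentiableAt_id
  have h1 : DifferentiableAt ℂ F (p.1, p.2) := by rw [Prod.mk.eta]; exact h
  exact h1.comp p.2 h2

lemma sliceT_diffAt {F : ℂ × ℂ → ℂ} {p : ℂ × ℂ} (h : DifferentiableAt ℂ F p) :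
    DifferentiableAt ℂ (fun z => F (z, p.2)) p.1 := by
  have h2 : DifferentiableAt ℂ (fun z : ℂ => (z, (p.2 : ℂ))) p.1 :=
    differentiableAt_id.prodMk (differentiableAt_const _)
  have h1 : DifferentiableAt ℂ F (p.1, p.2) := by rw [Prod.mk.eta]; exact h
  exact h1.comp p.1 h2

lemma sliceS_mem {U : Set (ℂ × ℂ)} (hU : IsOpen U) {p : ℂ × ℂ} (hp : p ∈ U) :
    ∀ᶠ z in nhds p.2, (p.1, z) ∈ U := by
  have : {z : ℂ | (p.1, z) ∈ U} ∈ nhds p.2 :=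
    (hU.preimage (Continuous.prodMk continuous_const continuous_id)).mem_nhds (by simpa using hp)
  exact this

lemma sliceT_mem {U : Set (ℂ × ℂ)} (hU : IsOpen U) {p : ℂ × ℂ} (hp : p ∈ U) :
    ∀ᶠ z in nhds p.1, (z, p.2) ∈ U := by
  have : {z : ℂ | (z, p.2) ∈ U} ∈ nhds p.1 :=
    (hU.preimage (Continuous.prodMk continuous_id continuous_const)).mem_nhds (by simpa using hp)
  exact this

lemma dS_congr {F G : ℂ × ℂ → ℂ} {U : Set (ℂ × ℂ)} (hU : IsOpen U)
    (h : ∀ q ∈ U, F q = G q) {p : ℂ × ℂ} (hp : p ∈ U) : dS F p = dS G p := by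
  apply Filter.EventuallyEq.deriv_eq
  filter_upwards [sliceS_mem hU hp] with z hz
  exact h _ hz

/-- transfer a HasDerivAt through equality on U (s-slices) -/
lemma hasDerivAt_sliceS_congr {F G : ℂ × ℂ → ℂ} {U : Set (ℂ × ℂ)} (hU : IsOpen U)
    (h : ∀ q ∈ U, F q = G q) {p : ℂ × ℂ} (hp : p ∈ U) {v : ℂ}
    (hd : HasDerivAt (fun z => G (p.1, z)) v p.2) :
    HasDerivAt (fun z => F (p.1, z)) v p.2 := by
  apply hd.congr_of_eventuallyEq
  filter_upwards [sliceS_mem hU hp] with z hz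
  exact h _ hz

lemma hasDerivAt_sliceT_congr {F G : ℂ × ℂ → ℂ} {U : Set (ℂ × ℂ)} (hU : IsOpen U)
    (h : ∀ q ∈ U, F q = G q) {p : ℂ × ℂ} (hp : p ∈ U) {v : ℂ}
    (hd : HasDerivAt (fun z => G (z, p.2)) v p.1) :
    HasDerivAt (fun z => F (z, p.2)) v p.1 := by
  apply hd.congr_of_eventuallyEq
  filter_upwards [sliceT_mem hU hp] with z hz
  exact h _ hz

lemma differentiableAt_finset_prod2 {ι : Type*} [DecidableEq ι] {u : Finset ι}
    {f : ι → ℂ × ℂ → ℂ} {p : ℂ × ℂ} (h : ∀ i ∈ u, DifferentiableAt ℂ (f i) p) :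
    DifferentiableAt ℂ (fun q => ∏ i ∈ u, f i q) p :=
  (HasFDerivAt.finset_prod (fun i hi => (h i hi).hasFDerivAt)).differentiableAt

lemma det_differentiableAt {n : Type*} [Fintype n] [DecidableEq n]
    (M : ℂ × ℂ → Matrix n n ℂ) {p : ℂ × ℂ}
    (h : ∀ i j, DifferentiableAt ℂ (fun q => M q i j) p) :
    DifferentiableAt ℂ (fun q => (M q).det) p := by
  simp only [Matrix.det_apply']
  refine DifferentiableAt.fun_sum fun σ _ => ?_
  have hprod : DifferentiableAt ℂ (fun q => ∏ i, M q (σ i) i) p :=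
    differentiableAt_finset_prod2 (f := fun i q => M q (σ i) i) (fun i _ => h (σ i) i)
  exact hprod.const_mul _

lemma natDegree_sum_C_mul_X_pow_lt {g : ℕ} (hg : 0 < g) (a : Fin g → ℂ) :
    (∑ k : Fin g, C (a k) * X ^ (k : ℕ)).natDegree < g := by
  have h := natDegree_sum_le_of_forall_le (s := univ) (fun k : Fin g => C (a k) * X ^ (k : ℕ))
    (n := g - 1) ?_
  · omega
  · intro k _
    refine le_trans (natDegree_C_mul_le _ _) ?_
    rw [natDegree_X_pow]
    omega

lemma eval_sum_C_mul_X_pow {g : ℕ} (a : Fin g → ℂ) (z : ℂ) :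
    (∑ k : Fin g, C (a k) * X ^ (k : ℕ)).eval z = ∑ k : Fin g, a k * z ^ (k : ℕ) := by
  rw [eval_finset_sum]
  simp

lemma eval_derivative_sum_C_mul_X_pow {g : ℕ} (a : Fin g → ℂ) (z : ℂ) :
    (∑ k : Fin g, C (a k) * X ^ (k : ℕ)).derivative.eval z
      = ∑ k : Fin g, a k * ((k : ℕ) * z ^ ((k : ℕ) - 1)) := by
  rw [derivative_sum]
  rw [eval_finset_sum]
  apply Finset.sum_congr rfl
  intro k _
  rw [derivative_C_mul, derivative_X_pow]
  simp

lemma lag_unique {g : ℕ} (hg : 0 < g) (xx yy Fdv cv : Fin g → ℂ)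
    (hinj : Function.Injective xx)
    (hFd : ∀ i, Fdv i = ∏ j ∈ univ.erase i, (xx i - xx j))
    (hFdne : ∀ i, Fdv i ≠ 0)
    (hc : ∀ i, ∑ k : Fin g, cv k * xx i ^ (k : ℕ) = yy i) :
    (∑ k : Fin g, C (cv k) * X ^ (k : ℕ) : Polynomial ℂ)
      = ∑ i : Fin g, C (yy i / Fdv i) * ∏ j ∈ univ.erase i, (X - C (xx j)) := by
  set P : Polynomial ℂ := (∑ k : Fin g, C (cv k) * X ^ (k : ℕ))
      - ∑ i : Fin g, C (yy i / Fdv i) * ∏ j ∈ univ.erase i, (X - C (xx j)) with hP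
  have hdeg : P.natDegree < g := by
    rw [hP]
    have h1 := natDegree_sum_C_mul_X_pow_lt hg cv
    have h2 : (∑ i : Fin g, C (yy i / Fdv i) * ∏ j ∈ univ.erase i, (X - C (xx j))).natDegree
        ≤ g - 1 := by
      apply natDegree_sum_le_of_forall_le
      intro i _
      refine le_trans (natDegree_C_mul_le _ _) ?_
      refine le_trans (natDegree_prod_le _ _) ?_
      have : ∀ j ∈ univ.erase i, ((X : Polynomial ℂ) - C (xx j)).natDegree ≤ 1 := by
        intro j _; rw [natDegree_X_sub_C]
      refine le_trans (Finset.sum_le_sum this) ?_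
      simp [Finset.card_erase_of_mem]
    have := natDegree_sub_le (∑ k : Fin g, C (cv k) * X ^ (k : ℕ))
      (∑ i : Fin g, C (yy i / Fdv i) * ∏ j ∈ univ.erase i, (X - C (xx j)))
    omega
  have heval : ∀ i, P.eval (xx i) = 0 := by
    intro i
    rw [hP, eval_sub, eval_sum_C_mul_X_pow, hc i, eval_finset_sum]
    rw [Finset.sum_eq_single i]
    · rw [eval_mul, eval_C, eval_prod]
      simp only [eval_sub, eval_X, eval_C]
      rw [← hFd i, div_mul_cancel₀ _ (hFdne i)]
      ring
    · intro l _ hl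
      rw [eval_mul, eval_prod]
      rw [Finset.prod_eq_zero (Finset.mem_erase.2 ⟨Ne.symm hl, mem_univ i⟩) (by simp)]
      ring
    · intro h; exact absurd (mem_univ i) h
  have hP0 : P = 0 := by
    apply Polynomial.eq_zero_of_natDegree_lt_card_of_eval_eq_zero P hinj heval
    simpa using hdeg
  rw [hP, sub_eq_zero] at hP0
  exact hP0


lemma sq_dvd_of_root_root_deriv (p : Polynomial ℂ) (a : ℂ)
    (h1 : p.eval a = 0) (h2 : p.derivative.eval a = 0) : (X - C a) ^ 2 ∣ p := by
  obtain ⟨q, rfl⟩ := (dvd_iff_isRoot).2 h1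
  have hq : q.eval a = 0 := by
    have := h2
    rw [derivative_mul] at this
    simp [eval_mul, eval_add, eval_sub] at this
    simpa using this
  obtain ⟨r, rfl⟩ := (dvd_iff_isRoot).2 hq
  exact ⟨r, by ring⟩


lemma my_derivative_finset_prod {ι : Type*} [DecidableEq ι] (s : Finset ι) (f : ι → Polynomial ℂ) :
    Polynomial.derivative (∏ i ∈ s, f i) =
      ∑ i ∈ s, (∏ j ∈ s.erase i, f j) * Polynomial.derivative (f i) := by
  classical
  induction s using Finset.induction_on with
  | empty => simp
  | @insert a s ha ih =>
    rw [Finset.prod_insert ha, derivative_mul, ih, Finset.sum_insert ha, Finset.erase_insert ha]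
    rw [Finset.mul_sum]
    congr 1
    · ring
    · apply Finset.sum_congr rfl
      intro i hi
      have hia : i ≠ a := by rintro rfl; exact ha hi
      rw [Finset.erase_insert_of_ne hia.symm,
        Finset.prod_insert (fun h => ha (Finset.mem_of_mem_erase h))]
      ring

lemma ALG (g : ℕ) (hg : 0 < g) (x y : Fin g → ℂ) (bb : Fin (2 * g + 1) → ℂ)
    (hxd : Function.Injective x)
    (V A : Polynomial ℂ) (hVdeg : V.natDegree < g) (hAdeg : A.natDegree < g)
    (hy2 : ∀ i, y i ^ 2 = ∏ j, (x i - bb j))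
    (hV : ∀ i, V.eval (x i) = y i)
    (hA : ∀ i, A.eval (x i) * (∏ j ∈ univ.erase i, (x i - x j))
          + 2 * y i * V.derivative.eval (x i)
        = ∑ j, ∏ l ∈ univ.erase j, (x i - bb l)) :
    A * (∏ i, (X - C (x i))) + V ^ 2
      + (X + C (-(∑ j, bb j) + 2 * ∑ i, x i)) * (∏ i, (X - C (x i))) ^ 2
      = ∏ j, (X - C (bb j)) := by
  set e : ℂ := -(∑ j, bb j) + 2 * ∑ i, x i with he
  set B : Polynomial ℂ := ∏ i, (X - C (x i)) with hB
  set f : Polynomial ℂ := ∏ j, (X - C (bb j)) with hf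
  set D : Polynomial ℂ := A * B + V ^ 2 + (X + C e) * B ^ 2 - f with hD
  have hBm : B.Monic := monic_prod_of_monic _ _ fun i _ => monic_X_sub_C _
  have hfm : f.Monic := monic_prod_of_monic _ _ fun j _ => monic_X_sub_C _
  have hBdeg : B.natDegree = g := by
    rw [hB, natDegree_prod _ _ fun i _ => X_sub_C_ne_zero _]
    simp
  have hfdeg : f.natDegree = 2 * g + 1 := by
    rw [hf, natDegree_prod _ _ fun i _ => X_sub_C_ne_zero _]
    simp
  have hevalB : ∀ i, B.eval (x i) = 0 := by
    intro i
    rw [hB, eval_prod]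
    exact Finset.prod_eq_zero (mem_univ i) (by simp)
  have hBder : ∀ i, B.derivative.eval (x i) = ∏ j ∈ univ.erase i, (x i - x j) := by
    intro i
    rw [hB, my_derivative_finset_prod]
    rw [eval_finset_sum]
    rw [Finset.sum_eq_single i]
    · simp [eval_prod]
    · intro k _ hk
      have : (x i - x i) = 0 := sub_self _
      rw [eval_mul, eval_prod]
      rw [Finset.prod_eq_zero (Finset.mem_erase.2 ⟨Ne.symm hk, mem_univ i⟩) (by simp)]
      ring
    · intro h; exact absurd (mem_univ i) h
  have hfder : ∀ z : ℂ, f.derivative.eval z = ∑ j, ∏ l ∈ univ.erase j, (z - bb l) := by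
    intro z
    rw [hf, my_derivative_finset_prod, eval_finset_sum]
    congr 1; funext j
    simp [eval_prod]
  have hevalf : ∀ i, f.eval (x i) = ∏ j, (x i - bb j) := by
    intro i; rw [hf, eval_prod]; simp
  have hDroot : ∀ i, D.eval (x i) = 0 := by
    intro i
    rw [hD]
    simp only [eval_sub, eval_add, eval_mul, eval_pow, hevalB i, hV i, hevalf i]
    rw [← hy2 i]
    ring
  have hD'root : ∀ i, D.derivative.eval (x i) = 0 := by
    intro i
    rw [hD]
    simp only [derivative_sub, derivative_add, derivative_mul, derivative_pow, derivative_X,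
      derivative_C, eval_sub, eval_add, eval_mul, eval_pow, eval_X, eval_C]
    rw [hBder i]
    simp only [hevalB i, hV i, hfder (x i)]
    have := hA i
    rw [← this]
    ring
  have hsq : ∀ i, (X - C (x i)) ^ 2 ∣ D := fun i =>
    sq_dvd_of_root_root_deriv D (x i) (hDroot i) (hD'root i)
  have hdvd : B ^ 2 ∣ D := by
    have : B ^ 2 = ∏ i, (X - C (x i)) ^ 2 := by rw [hB, Finset.prod_pow]
    rw [this]
    refine Finset.prod_dvd_of_coprime ?_ fun i _ => hsq i
    intro i _ j _ hij
    exact (Polynomial.pairwise_coprime_X_sub_C hxd hij).pow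
  have hB2deg : (B ^ 2).natDegree = 2 * g := by
    rw [natDegree_pow, hBdeg]
  have hB2m : (B ^ 2).Monic := hBm.pow 2
  have hnextB : B.nextCoeff = -∑ i, x i := prod_X_sub_C_nextCoeff _
  have hnextf : f.nextCoeff = -∑ j, bb j := prod_X_sub_C_nextCoeff _
  have hcoeff : ∀ m : ℕ, 2 * g ≤ m → D.coeff m = 0 := by
    intro m hm
    have h1 : (A * B).coeff m = 0 := by
      apply coeff_eq_zero_of_natDegree_lt
      calc (A * B).natDegree ≤ A.natDegree + B.natDegree := natDegree_mul_le
        _ < g + g := by rw [hBdeg]; omega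
        _ ≤ m := by omega
    have h2 : (V ^ 2).coeff m = 0 := by
      apply coeff_eq_zero_of_natDegree_lt
      calc (V ^ 2).natDegree ≤ 2 * V.natDegree := by
            rw [natDegree_pow]
        _ < 2 * g := by omega
        _ ≤ m := hm
    obtain ⟨m', rfl⟩ : ∃ m', m = m' + 1 := ⟨m - 1, by omega⟩
    have h3 : ((X + C e) * B ^ 2).coeff (m' + 1)
        = (B ^ 2).coeff m' + e * (B ^ 2).coeff (m' + 1) := by
      rw [add_mul, coeff_add, coeff_X_mul, coeff_C_mul]
    rw [hD, coeff_sub, coeff_add, coeff_add, h1, h2, h3]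
    rcases Nat.lt_or_ge m' (2 * g) with hm' | hm'
    · -- m = 2g, m' = 2g - 1
      have hm'eq : m' = 2 * g - 1 := by omega
      have hgpos : 1 ≤ 2 * g := by omega
      have hc1 : (B ^ 2).coeff m' = -∑ i, x i + -∑ i, x i := by
        have h4 : (B ^ 2).nextCoeff = B.nextCoeff + B.nextCoeff := by
          rw [sq]; exact hBm.nextCoeff_mul hBm
        have h5 : (B ^ 2).nextCoeff = (B ^ 2).coeff ((B ^ 2).natDegree - 1) :=
          nextCoeff_of_natDegree_pos (by omega)
        rw [hB2deg] at h5
        rw [hm'eq, ← h5, h4, hnextB]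
      have hc2 : (B ^ 2).coeff (m' + 1) = 1 := by
        have : m' + 1 = (B ^ 2).natDegree := by omega
        rw [this, hB2m.coeff_natDegree]
      have hc3 : f.coeff (m' + 1) = -∑ j, bb j := by
        have h5 : f.nextCoeff = f.coeff (f.natDegree - 1) :=
          nextCoeff_of_natDegree_pos (by rw [hfdeg]; omega)
        rw [hfdeg, hnextf] at h5
        have hmm : m' + 1 = 2 * g + 1 - 1 := by omega
        rw [hmm, ← h5]
      rw [hc1, hc2, hc3]
      rw [he]; ring
    · rcases Nat.lt_or_ge (m' + 1) (2 * g + 2) with hm2 | hm2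
      · -- m = 2g + 1
        have hm'eq : m' = 2 * g := by omega
        have hc1 : (B ^ 2).coeff m' = 1 := by rw [hm'eq, ← hB2deg, hB2m.coeff_natDegree]
        have hc2 : (B ^ 2).coeff (m' + 1) = 0 :=
          coeff_eq_zero_of_natDegree_lt (by omega)
        have hc3 : f.coeff (m' + 1) = 1 := by
          rw [hm'eq, ← hfdeg, hfm.coeff_natDegree]
        rw [hc1, hc2, hc3]; ring
      · have hc1 : (B ^ 2).coeff m' = 0 := coeff_eq_zero_of_natDegree_lt (by omega)
        have hc2 : (B ^ 2).coeff (m' + 1) = 0 := coeff_eq_zero_of_natDegree_lt (by omega)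
        have hc3 : f.coeff (m' + 1) = 0 := coeff_eq_zero_of_natDegree_lt (by omega)
        rw [hc1, hc2, hc3]; ring
  have hD0 : D = 0 := by
    by_contra h0
    apply h0
    apply Polynomial.eq_zero_of_dvd_of_natDegree_lt hdvd
    rw [hB2deg]
    have : D.degree < (2 * g : ℕ) := (degree_lt_iff_coeff_zero _ _).2 (by
      intro m hm; exact hcoeff m (by exact_mod_cast hm))
    exact natDegree_lt_iff_degree_lt h0 |>.2 this
  have := hD0
  rw [hD, sub_eq_zero] at this
  exact this

section Main

variable {g : ℕ} {b : Fin (2 * g + 1) → ℂ} {U : Set (ℂ × ℂ)} {x y : Fin g → ℂ × ℂ → ℂ}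

lemma hFdne (hdist : ∀ p ∈ U, ∀ i j, i ≠ j → x i p ≠ x j p) :
    ∀ q ∈ U, ∀ i, alFd g x i q ≠ 0 := by
  intro q hq i
  apply Finset.prod_ne_zero_iff.2
  intro j hj
  exact sub_ne_zero.2 (hdist q hq i j (Ne.symm (Finset.mem_erase.1 hj).1))

lemma hxdiff (hU : IsOpen U) (hx : ∀ i, DifferentiableOn ℂ (x i) U) :
    ∀ q ∈ U, ∀ i, DifferentiableAt ℂ (x i) q :=
  fun q hq i => (hx i q hq).differentiableAt (hU.mem_nhds hq)

lemma hxS (hU : IsOpen U) (hx : ∀ i, DifferentiableOn ℂ (x i) U)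
    (hflowS : ∀ p ∈ U, ∀ i, dS (x i) p = 2 * y i p / alFd g x i p) :
    ∀ q ∈ U, ∀ i, HasDerivAt (fun z => x i (q.1, z)) (2 * y i q / alFd g x i q) q.2 := by
  intro q hq i
  have hd := (sliceS_diffAt (hxdiff hU hx q hq i)).hasDerivAt
  rwa [show deriv (fun z => x i (q.1, z)) q.2 = 2 * y i q / alFd g x i q from hflowS q hq i] at hd

lemma hxT (hU : IsOpen U) (hx : ∀ i, DifferentiableOn ℂ (x i) U)
    (hflowT : ∀ p ∈ U, ∀ i,
      dT (x i) p = 2 * y i p * (-∑ j ∈ Finset.univ.erase i, x j p) / alFd g x i p) :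
    ∀ q ∈ U, ∀ i, HasDerivAt (fun z => x i (z, q.2))
      (2 * y i q * (x i q - ∑ l, x l q) / alFd g x i q) q.1 := by
  intro q hq i
  have hd := (sliceT_diffAt (hxdiff hU hx q hq i)).hasDerivAt
  have he : -∑ j ∈ Finset.univ.erase i, x j q = x i q - ∑ l, x l q := by
    have := Finset.add_sum_erase univ (fun j => x j q) (mem_univ i)
    linear_combination -this
  have h2 := hflowT q hq i
  rw [he] at h2
  rwa [show deriv (fun z => x i (z, q.2)) q.1
      = 2 * y i q * (x i q - ∑ l, x l q) / alFd g x i q from h2] at hd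

lemma hyS (hU : IsOpen U) (hx : ∀ i, DifferentiableOn ℂ (x i) U)
    (hy : ∀ i, DifferentiableOn ℂ (y i) U)
    (hy2 : ∀ p ∈ U, ∀ i, (y i p) ^ 2 = ∏ j, (x i p - b j))
    (hyne : ∀ p ∈ U, ∀ i, y i p ≠ 0)
    (hdist : ∀ p ∈ U, ∀ i j, i ≠ j → x i p ≠ x j p)
    (hflowS : ∀ p ∈ U, ∀ i, dS (x i) p = 2 * y i p / alFd g x i p) :
    ∀ q ∈ U, ∀ i, HasDerivAt (fun z => y i (q.1, z))
      ((∑ j, ∏ l ∈ univ.erase j, (x i q - b l)) / alFd g x i q) q.2 := by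
  intro q hq i
  have hd := (sliceS_diffAt ((hy i q hq).differentiableAt (hU.mem_nhds hq))).hasDerivAt
  set dv := deriv (fun z => y i (q.1, z)) q.2 with hdv
  have h2 : HasDerivAt (fun z => (y i (q.1, z)) ^ 2) (2 * y i q ^ (2 - 1) * dv) q.2 := hd.pow 2
  have h3 : HasDerivAt (fun z => ∏ j, (x i (q.1, z) - b j))
      (∑ j, (∏ l ∈ univ.erase j, (x i q - b l)) • (2 * y i q / alFd g x i q)) q.2 :=
    HasDerivAt.fun_finsetProd (fun j _ => (hxS hU hx hflowS q hq i).sub_const (b j))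
  have h4 : HasDerivAt (fun z => (y i (q.1, z)) ^ 2)
      (∑ j, (∏ l ∈ univ.erase j, (x i q - b l)) • (2 * y i q / alFd g x i q)) q.2 := by
    apply h3.congr_of_eventuallyEq
    filter_upwards [sliceS_mem hU hq] with z hz
    exact hy2 _ hz i
  have h5 := h2.unique h4
  have h6 : ∑ j, (∏ l ∈ univ.erase j, (x i q - b l)) • (2 * y i q / alFd g x i q)
      = (∑ j, ∏ l ∈ univ.erase j, (x i q - b l)) * (2 * y i q / alFd g x i q) := by
    rw [Finset.sum_mul]
    exact Finset.sum_congr rfl fun j _ => by rw [smul_eq_mul]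
  rw [h6] at h5
  have hyq := hyne q hq i
  have hFd := hFdne hdist q hq i
  have h7 : dv = (∑ j, ∏ l ∈ univ.erase j, (x i q - b l)) / alFd g x i q := by
    have h8 : (2 : ℂ) * y i q ≠ 0 := by
      simp [hyq]
    apply mul_left_cancel₀ h8
    rw [show (2 : ℂ) * y i q * dv = 2 * y i q ^ (2 - 1) * dv by ring, h5]
    field_simp
  rwa [h7] at hd

noncomputable def cF (g : ℕ) (x y : Fin g → ℂ × ℂ → ℂ) (k : Fin g) (q : ℂ × ℂ) : ℂ :=
  (Matrix.vandermonde fun i => x i q).det⁻¹ *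
    Matrix.cramer (Matrix.vandermonde fun i => x i q) (fun i => y i q) k

lemma hdetne (hdist : ∀ p ∈ U, ∀ i j, i ≠ j → x i p ≠ x j p) :
    ∀ q ∈ U, (Matrix.vandermonde fun i => x i q).det ≠ 0 := by
  intro q hq
  rw [Matrix.det_vandermonde_ne_zero_iff]
  intro i j hij
  by_contra hne
  exact hdist q hq i j hne hij

lemma hcsolve (hdist : ∀ p ∈ U, ∀ i j, i ≠ j → x i p ≠ x j p) :
    ∀ q ∈ U, ∀ i, ∑ k, cF g x y k q * x i q ^ (k : ℕ) = y i q := by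
  intro q hq i
  have h := congrFun (Matrix.mulVec_cramer (Matrix.vandermonde fun i => x i q)
    (fun i => y i q)) i
  simp only [Matrix.mulVec, dotProduct, Matrix.vandermonde_apply, Pi.smul_apply,
    smul_eq_mul] at h
  have h2 : ∑ k, cF g x y k q * x i q ^ (k : ℕ)
      = (Matrix.vandermonde fun i => x i q).det⁻¹
        * ∑ k : Fin g, x i q ^ (k : ℕ) * Matrix.cramer (Matrix.vandermonde fun i => x i q)
            (fun i => y i q) k := by
    rw [Finset.mul_sum]
    apply Finset.sum_congr rfl
    intro k _
    rw [cF]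
    ring
  rw [h2, h]
  field_simp [hdetne hdist q hq]

lemma hcdiff (hU : IsOpen U) (hx : ∀ i, DifferentiableOn ℂ (x i) U)
    (hy : ∀ i, DifferentiableOn ℂ (y i) U)
    (hdist : ∀ p ∈ U, ∀ i j, i ≠ j → x i p ≠ x j p) :
    ∀ q ∈ U, ∀ k, DifferentiableAt ℂ (cF g x y k) q := by
  intro q hq k
  have hdet : DifferentiableAt ℂ (fun q' => (Matrix.vandermonde fun i => x i q').det) q := by
    apply det_differentiableAt
    intro i j
    simp only [Matrix.vandermonde_apply]
    exact (hxdiff hU hx q hq i).pow _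
  apply DifferentiableAt.mul
  · exact hdet.inv (hdetne hdist q hq)
  · simp only [Matrix.cramer_apply]
    apply det_differentiableAt
    intro i j
    by_cases hjk : j = k
    · simp only [Matrix.updateCol_apply, hjk, if_pos rfl]
      exact (hy i q hq).differentiableAt (hU.mem_nhds hq)
    · simp only [Matrix.updateCol_apply, if_neg hjk, Matrix.vandermonde_apply]
      exact (hxdiff hU hx q hq i).pow _

lemma hcS (hU : IsOpen U) (hx : ∀ i, DifferentiableOn ℂ (x i) U)
    (hy : ∀ i, DifferentiableOn ℂ (y i) U)
    (hdist : ∀ p ∈ U, ∀ i j, i ≠ j → x i p ≠ x j p) :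
    ∀ q ∈ U, ∀ k, HasDerivAt (fun z => cF g x y k (q.1, z)) (dS (cF g x y k) q) q.2 :=
  fun q hq k => (sliceS_diffAt (hcdiff hU hx hy hdist q hq k)).hasDerivAt

lemma hdinterp (hU : IsOpen U) (hx : ∀ i, DifferentiableOn ℂ (x i) U)
    (hy : ∀ i, DifferentiableOn ℂ (y i) U)
    (hy2 : ∀ p ∈ U, ∀ i, (y i p) ^ 2 = ∏ j, (x i p - b j))
    (hyne : ∀ p ∈ U, ∀ i, y i p ≠ 0)
    (hdist : ∀ p ∈ U, ∀ i j, i ≠ j → x i p ≠ x j p)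
    (hflowS : ∀ p ∈ U, ∀ i, dS (x i) p = 2 * y i p / alFd g x i p) :
    ∀ q ∈ U, ∀ i,
      (∑ k, dS (cF g x y k) q * x i q ^ (k : ℕ))
        + (∑ k, cF g x y k q * ((k : ℕ) * x i q ^ ((k : ℕ) - 1))) * (2 * y i q / alFd g x i q)
      = (∑ j, ∏ l ∈ univ.erase j, (x i q - b l)) / alFd g x i q := by
  intro q hq i
  have hterm : ∀ k : Fin g, HasDerivAt (fun z => cF g x y k (q.1, z) * (x i (q.1, z)) ^ (k : ℕ))
      (dS (cF g x y k) q * x i q ^ (k : ℕ)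
        + cF g x y k q * ((k : ℕ) * x i q ^ ((k : ℕ) - 1) * (2 * y i q / alFd g x i q))) q.2 :=
    fun k => (hcS hU hx hy hdist q hq k).mul ((hxS hU hx hflowS q hq i).pow (k : ℕ))
  have hsum := HasDerivAt.fun_sum (fun k (_ : k ∈ univ) => hterm k)
  have hdiff := hsum.sub (hyS hU hx hy hy2 hyne hdist hflowS q hq i)
  have hzero : HasDerivAt
      (fun z => (∑ k, cF g x y k (q.1, z) * (x i (q.1, z)) ^ (k : ℕ)) - y i (q.1, z))
      0 q.2 := by
    apply (hasDerivAt_const q.2 (0 : ℂ)).congr_of_eventuallyEq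
    filter_upwards [sliceS_mem hU hq] with z hz
    rw [sub_eq_zero]
    exact hcsolve hdist _ hz i
  have h5 := hdiff.unique hzero
  rw [Finset.sum_add_distrib] at h5
  have hswap : ∑ k, cF g x y k q * ((k : ℕ) * x i q ^ ((k : ℕ) - 1) * (2 * y i q / alFd g x i q))
      = (∑ k, cF g x y k q * ((k : ℕ) * x i q ^ ((k : ℕ) - 1))) * (2 * y i q / alFd g x i q) := by
    rw [Finset.sum_mul]
    apply Finset.sum_congr rfl
    intro k _
    ring
  rw [hswap] at h5
  linear_combination h5


lemma hALGpt (hg : 2 ≤ g) (hU : IsOpen U) (hx : ∀ i, DifferentiableOn ℂ (x i) U)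
    (hy : ∀ i, DifferentiableOn ℂ (y i) U)
    (hy2 : ∀ p ∈ U, ∀ i, (y i p) ^ 2 = ∏ j, (x i p - b j))
    (hyne : ∀ p ∈ U, ∀ i, y i p ≠ 0)
    (hdist : ∀ p ∈ U, ∀ i j, i ≠ j → x i p ≠ x j p)
    (hflowS : ∀ p ∈ U, ∀ i, dS (x i) p = 2 * y i p / alFd g x i p)
    (β : ℂ) (hβ : ∃ j, β = b j) :
    ∀ q ∈ U,
      (∑ k : Fin g, dS (cF g x y k) q * β ^ (k : ℕ)) * (∏ i, (β - x i q))
        + (∑ k : Fin g, cF g x y k q * β ^ (k : ℕ)) ^ 2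
        + (β + (-(∑ j, b j) + 2 * ∑ i, x i q)) * (∏ i, (β - x i q)) ^ 2 = 0 := by
  intro q hq
  have hinj : Function.Injective fun i => x i q := by
    intro i j hij; by_contra hne; exact hdist q hq i j hne hij
  have key := ALG g (by omega) (fun i => x i q) (fun i => y i q) b hinj
      (∑ k : Fin g, C (cF g x y k q) * X ^ (k : ℕ))
      (∑ k : Fin g, C (dS (cF g x y k) q) * X ^ (k : ℕ))
      (natDegree_sum_C_mul_X_pow_lt (by omega) _)
      (natDegree_sum_C_mul_X_pow_lt (by omega) _)
      (fun i => hy2 q hq i) ?hV ?hA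
  case hV =>
    intro i
    rw [eval_sum_C_mul_X_pow]
    exact hcsolve hdist q hq i
  case hA =>
    intro i
    rw [eval_sum_C_mul_X_pow, eval_derivative_sum_C_mul_X_pow]
    have h := hdinterp hU hx hy hy2 hyne hdist hflowS q hq i
    have hFd : alFd g x i q ≠ 0 := hFdne hdist q hq i
    rw [show (∏ j ∈ univ.erase i, (x i q - x j q)) = alFd g x i q from rfl]
    field_simp at h
    field_simp
    linear_combination h
  obtain ⟨j0, hj0⟩ := hβ
  have hkey := congrArg (Polynomial.eval β) key
  simp only [eval_add, eval_mul, eval_pow, eval_prod, eval_sub, eval_X, eval_C,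
    eval_sum_C_mul_X_pow] at hkey
  have hz : ∏ j, (β - b j) = 0 := Finset.prod_eq_zero (mem_univ j0) (by rw [hj0]; ring)
  rw [hz] at hkey
  linear_combination hkey

lemma hLagEval (hg : 2 ≤ g) (hdist : ∀ p ∈ U, ∀ i j, i ≠ j → x i p ≠ x j p) :
    ∀ q ∈ U, ∀ z : ℂ,
      ∑ k : Fin g, cF g x y k q * z ^ (k : ℕ)
        = ∑ i, y i q / alFd g x i q * ∏ j ∈ univ.erase i, (z - x j q) := by
  intro q hq z
  have hinj : Function.Injective fun i => x i q := by
    intro i j hij; by_contra hne; exact hdist q hq i j hne hij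
  have hl := lag_unique (g := g) (by omega) (fun i => x i q) (fun i => y i q)
    (fun i => alFd g x i q) (fun k => cF g x y k q) hinj (fun i => rfl)
    (fun i => hFdne hdist q hq i) (hcsolve hdist q hq)
  have h2 := congrArg (Polynomial.eval z) hl
  simpa [eval_sum_C_mul_X_pow, eval_finset_sum, eval_prod] using h2

lemma hpsieq (hg : 2 ≤ g) (hdist : ∀ p ∈ U, ∀ i j, i ≠ j → x i p ≠ x j p)
    (β : ℂ) (hxβ : ∀ p ∈ U, ∀ i, x i p ≠ β) :
    ∀ q ∈ U, alPsi g x y β q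
      = -((∑ k : Fin g, cF g x y k q * β ^ (k : ℕ)) / ∏ i, (β - x i q)) := by
  intro q hq
  have hBt : (∏ i, (β - x i q)) ≠ 0 :=
    Finset.prod_ne_zero_iff.2 fun i _ => sub_ne_zero.2 (Ne.symm (hxβ q hq i))
  have h1 : alPsi g x y β q * ∏ i, (β - x i q)
      = -∑ k : Fin g, cF g x y k q * β ^ (k : ℕ) := by
    rw [hLagEval hg hdist q hq β, alPsi, Finset.sum_mul, ← Finset.sum_neg_distrib]
    apply Finset.sum_congr rfl
    intro i _
    rw [show ∏ l, (β - x l q) = (β - x i q) * ∏ j ∈ univ.erase i, (β - x j q) from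
      (Finset.mul_prod_erase _ _ (mem_univ i)).symm]
    have hFd : alFd g x i q ≠ 0 := hFdne hdist q hq i
    have hxb : x i q - β ≠ 0 := sub_ne_zero.2 (hxβ q hq i)
    field_simp
    ring
  field_simp [hBt]
  linear_combination h1

lemma hpsiS (hg : 2 ≤ g) (hU : IsOpen U) (hx : ∀ i, DifferentiableOn ℂ (x i) U)
    (hy : ∀ i, DifferentiableOn ℂ (y i) U)
    (hy2 : ∀ p ∈ U, ∀ i, (y i p) ^ 2 = ∏ j, (x i p - b j))
    (hyne : ∀ p ∈ U, ∀ i, y i p ≠ 0)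
    (hdist : ∀ p ∈ U, ∀ i j, i ≠ j → x i p ≠ x j p)
    (hflowS : ∀ p ∈ U, ∀ i, dS (x i) p = 2 * y i p / alFd g x i p)
    (β : ℂ) (hβ : ∃ j, β = b j) (hxβ : ∀ p ∈ U, ∀ i, x i p ≠ β) :
    ∀ q ∈ U, HasDerivAt (fun z => alPsi g x y β (q.1, z))
      (β + (-(∑ j, b j) + 2 * ∑ i, x i q) - (alPsi g x y β q) ^ 2) q.2 := by
  intro q hq
  have hBtne : (∏ i, (β - x i q)) ≠ 0 :=
    Finset.prod_ne_zero_iff.2 fun i _ => sub_ne_zero.2 (Ne.symm (hxβ q hq i))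
  have hNS : HasDerivAt (fun z => ∑ k : Fin g, cF g x y k (q.1, z) * β ^ (k : ℕ))
      (∑ k : Fin g, dS (cF g x y k) q * β ^ (k : ℕ)) q.2 :=
    HasDerivAt.fun_sum (fun k _ => (hcS hU hx hy hdist q hq k).mul_const _)
  have hBtS0 : HasDerivAt (fun z => ∏ i, (β - x i (q.1, z)))
      (∑ i, (∏ j ∈ univ.erase i, (β - x j q)) • (-(2 * y i q / alFd g x i q))) q.2 :=
    HasDerivAt.fun_finsetProd (fun i _ => (hxS hU hx hflowS q hq i).const_sub β)
  have hval : (∑ i, (∏ j ∈ univ.erase i, (β - x j q)) • (-(2 * y i q / alFd g x i q)))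
      = -2 * ∑ k : Fin g, cF g x y k q * β ^ (k : ℕ) := by
    rw [hLagEval hg hdist q hq β, Finset.mul_sum]
    apply Finset.sum_congr rfl
    intro i _
    rw [smul_eq_mul]
    ring
  rw [hval] at hBtS0
  have hdiv := (hNS.div hBtS0 hBtne).neg
  have hψ := hasDerivAt_sliceS_congr hU (hpsieq hg hdist β hxβ) hq hdiv
  have hALG := hALGpt hg hU hx hy hy2 hyne hdist hflowS β hβ q hq
  have hvv : -(((∑ k : Fin g, dS (cF g x y k) q * β ^ (k : ℕ)) * (∏ i, (β - x i q))
        - (∑ k : Fin g, cF g x y k q * β ^ (k : ℕ))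
            * (-2 * ∑ k : Fin g, cF g x y k q * β ^ (k : ℕ)))
        / (∏ i, (β - x i q)) ^ 2)
      = β + (-(∑ j, b j) + 2 * ∑ i, x i q) - (alPsi g x y β q) ^ 2 := by
    rw [hpsieq hg hdist β hxβ q hq]
    field_simp
    linear_combination -hALG
  rwa [hvv] at hψ

lemma halphaS (hU : IsOpen U) (hx : ∀ i, DifferentiableOn ℂ (x i) U)
    (hdist : ∀ p ∈ U, ∀ i j, i ≠ j → x i p ≠ x j p)
    (hflowS : ∀ p ∈ U, ∀ i, dS (x i) p = 2 * y i p / alFd g x i p)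
    (β : ℂ) (hxβ : ∀ p ∈ U, ∀ i, x i p ≠ β)
    (α : ℂ × ℂ → ℂ) (hα : DifferentiableOn ℂ α U) (hαne : ∀ p ∈ U, α p ≠ 0)
    (hα2 : ∀ p ∈ U, (α p) ^ 2 = ∏ i : Fin g, (x i p - β)) :
    ∀ q ∈ U, HasDerivAt (fun z => α (q.1, z)) (alPsi g x y β q * α q) q.2 := by
  intro q hq
  have hda := (sliceS_diffAt ((hα q hq).differentiableAt (hU.mem_nhds hq))).hasDerivAt
  set da := deriv (fun z => α (q.1, z)) q.2 with hdadef
  have hprod : HasDerivAt (fun z => ∏ i, (x i (q.1, z) - β))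
      (∑ i, (∏ j ∈ univ.erase i, (x j q - β)) • (2 * y i q / alFd g x i q)) q.2 :=
    HasDerivAt.fun_finsetProd (fun i _ => (hxS hU hx hflowS q hq i).sub_const β)
  have hEq : HasDerivAt (fun z => α (q.1, z) ^ 2)
      (∑ i, (∏ j ∈ univ.erase i, (x j q - β)) • (2 * y i q / alFd g x i q)) q.2 := by
    apply hprod.congr_of_eventuallyEq
    filter_upwards [sliceS_mem hU hq] with z hz
    exact hα2 _ hz
  have huniq := (hda.pow 2).unique hEq
  have hval : (∑ i, (∏ j ∈ univ.erase i, (x j q - β)) • (2 * y i q / alFd g x i q))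
      = 2 * alPsi g x y β q * α q ^ 2 := by
    rw [hα2 q hq, alPsi, Finset.mul_sum, Finset.sum_mul]
    apply Finset.sum_congr rfl
    intro i _
    rw [smul_eq_mul, show (∏ l, (x l q - β)) = (x i q - β) * ∏ j ∈ univ.erase i, (x j q - β)
      from (Finset.mul_prod_erase _ _ (mem_univ i)).symm]
    have hFd : alFd g x i q ≠ 0 := hFdne hdist q hq i
    have hxb : x i q - β ≠ 0 := sub_ne_zero.2 (hxβ q hq i)
    field_simp
  rw [hval] at huniq
  have h2α : (2 : ℂ) * α q ≠ 0 := by simp [hαne q hq]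
  simp only [Prod.mk.eta, pow_one] at huniq
  push_cast at huniq
  have hfin : da = alPsi g x y β q * α q := by
    apply mul_left_cancel₀ h2α
    linear_combination huniq
  rwa [hfin] at hda

lemma halphaT (hU : IsOpen U) (hx : ∀ i, DifferentiableOn ℂ (x i) U)
    (hdist : ∀ p ∈ U, ∀ i j, i ≠ j → x i p ≠ x j p)
    (hflowT : ∀ p ∈ U, ∀ i,
      dT (x i) p = 2 * y i p * (-∑ j ∈ Finset.univ.erase i, x j p) / alFd g x i p)
    (β : ℂ) (hxβ : ∀ p ∈ U, ∀ i, x i p ≠ β)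
    (α : ℂ × ℂ → ℂ) (hα : DifferentiableOn ℂ α U) (hαne : ∀ p ∈ U, α p ≠ 0)
    (hα2 : ∀ p ∈ U, (α p) ^ 2 = ∏ i : Fin g, (x i p - β)) :
    ∀ q ∈ U, HasDerivAt (fun z => α (z, q.2))
      (((β - ∑ l, x l q) * alPsi g x y β q + ∑ i, y i q / alFd g x i q) * α q) q.1 := by
  intro q hq
  have hda := (sliceT_diffAt ((hα q hq).differentiableAt (hU.mem_nhds hq))).hasDerivAt
  set da := deriv (fun z => α (z, q.2)) q.1 with hdadef
  have hprod : HasDerivAt (fun z => ∏ i, (x i (z, q.2) - β))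
      (∑ i, (∏ j ∈ univ.erase i, (x j q - β))
        • (2 * y i q * (x i q - ∑ l, x l q) / alFd g x i q)) q.1 :=
    HasDerivAt.fun_finsetProd (fun i _ => (hxT hU hx hflowT q hq i).sub_const β)
  have hEq : HasDerivAt (fun z => α (z, q.2) ^ 2)
      (∑ i, (∏ j ∈ univ.erase i, (x j q - β))
        • (2 * y i q * (x i q - ∑ l, x l q) / alFd g x i q)) q.1 := by
    apply hprod.congr_of_eventuallyEq
    filter_upwards [sliceT_mem hU hq] with z hz
    exact hα2 _ hz
  have huniq := (hda.pow 2).unique hEq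
  have hval : (∑ i, (∏ j ∈ univ.erase i, (x j q - β))
        • (2 * y i q * (x i q - ∑ l, x l q) / alFd g x i q))
      = 2 * ((β - ∑ l, x l q) * alPsi g x y β q + ∑ i, y i q / alFd g x i q) * α q ^ 2 := by
    rw [hα2 q hq, alPsi, Finset.mul_sum, ← Finset.sum_add_distrib, Finset.mul_sum,
      Finset.sum_mul]
    apply Finset.sum_congr rfl
    intro i _
    rw [smul_eq_mul, show (∏ l, (x l q - β)) = (x i q - β) * ∏ j ∈ univ.erase i, (x j q - β)
      from (Finset.mul_prod_erase _ _ (mem_univ i)).symm]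
    have hFd : alFd g x i q ≠ 0 := hFdne hdist q hq i
    have hxb : x i q - β ≠ 0 := sub_ne_zero.2 (hxβ q hq i)
    field_simp
    ring
  rw [hval] at huniq
  simp only [Prod.mk.eta, pow_one] at huniq
  push_cast at huniq
  have h2α : (2 : ℂ) * α q ≠ 0 := by simp [hαne q hq]
  have hfin : da = ((β - ∑ l, x l q) * alPsi g x y β q + ∑ i, y i q / alFd g x i q) * α q := by
    apply mul_left_cancel₀ h2α
    linear_combination huniq
  rwa [hfin] at hda

end Main


lemma HasDerivAt_congr_value {f : ℂ → ℂ} {v w z : ℂ} (h : HasDerivAt f v z) (e : v = w) :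
    HasDerivAt f w z := e ▸ h

theorem stmt17
    (g : ℕ) (hg : 2 ≤ g)
    (b : Fin (2 * g + 1) → ℂ) (hb : Function.Injective b)
    (U : Set (ℂ × ℂ)) (hU : IsOpen U) (hUne : U.Nonempty)
    (x y : Fin g → ℂ × ℂ → ℂ)
    (hx : ∀ i, DifferentiableOn ℂ (x i) U)
    (hy : ∀ i, DifferentiableOn ℂ (y i) U)
    (hdist : ∀ p ∈ U, ∀ i j, i ≠ j → x i p ≠ x j p)
    (hy2 : ∀ p ∈ U, ∀ i, (y i p) ^ 2 = ∏ j, (x i p - b j))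
    (hyne : ∀ p ∈ U, ∀ i, y i p ≠ 0)
    (hflowS : ∀ p ∈ U, ∀ i, dS (x i) p = 2 * y i p / alFd g x i p)
    (hflowT : ∀ p ∈ U, ∀ i,
      dT (x i) p = 2 * y i p * (-∑ j ∈ Finset.univ.erase i, x j p) / alFd g x i p)
    (hx1 : ∀ p ∈ U, ∀ i, x i p ≠ b 0)
    (hx2 : ∀ p ∈ U, ∀ i, x i p ≠ b 1)
    (α₁ α₂ : ℂ × ℂ → ℂ)
    (hα₁ : DifferentiableOn ℂ α₁ U) (hα₂ : DifferentiableOn ℂ α₂ U)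
    (hα₁ne : ∀ p ∈ U, α₁ p ≠ 0) (hα₂ne : ∀ p ∈ U, α₂ p ≠ 0)
    (hα₁2 : ∀ p ∈ U, (α₁ p) ^ 2 = ∏ i : Fin g, (x i p - b 0))
    (hα₂2 : ∀ p ∈ U, (α₂ p) ^ 2 = ∏ i : Fin g, (x i p - b 1))
 :
    ∀ p ∈ U,
      4 * dT (fun q => α₂ q / α₁ q) p
        - (2 * (-(∑ j, b j)) + 3 * (b 0 + b 1)) * dS (fun q => α₂ q / α₁ q) p
        + 6 * (alPsi g x y (b 0) p) ^ 2 * dS (fun q => α₂ q / α₁ q) p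
        - dS (dS (dS (fun q => α₂ q / α₁ q))) p
        + 6 * (b 0 - b 1) * alPsi g x y (b 0) p * (α₂ p / α₁ p) = 0 := by
  intro p hp
  have hβ1 : ∃ j : Fin (2 * g + 1), b 0 = b j := ⟨0, rfl⟩
  have hβ2 : ∃ j : Fin (2 * g + 1), b 1 = b j := ⟨1, rfl⟩
  have hψ1S := hpsiS hg hU hx hy hy2 hyne hdist hflowS (b 0) hβ1 hx1
  have hψ2S := hpsiS hg hU hx hy hy2 hyne hdist hflowS (b 1) hβ2 hx2
  have hα1S := halphaS hU hx hdist hflowS (b 0) hx1 α₁ hα₁ hα₁ne hα₁2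
  have hα2S := halphaS hU hx hdist hflowS (b 1) hx2 α₂ hα₂ hα₂ne hα₂2
  have hα1T := halphaT hU hx hdist hflowT (b 0) hx1 α₁ hα₁ hα₁ne hα₁2
  have hα2T := halphaT hU hx hdist hflowT (b 1) hx2 α₂ hα₂ hα₂ne hα₂2
  have hRS : ∀ q ∈ U, HasDerivAt (fun z => α₂ (q.1, z) / α₁ (q.1, z))
      ((alPsi g x y (b 1) q - alPsi g x y (b 0) q) * (α₂ q / α₁ q)) q.2 := by
    intro q hq
    apply HasDerivAt_congr_value ((hα2S q hq).div (hα1S q hq) (hα₁ne q hq))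
    simp only [Prod.mk.eta]
    field_simp [hα₁ne q hq]
  have hdSR : ∀ q ∈ U, dS (fun q' => α₂ q' / α₁ q') q
      = (alPsi g x y (b 1) q - alPsi g x y (b 0) q) * (α₂ q / α₁ q) := fun q hq => (hRS q hq).deriv
  have hvS : ∀ q ∈ U, HasDerivAt
      (fun z => alPsi g x y (b 1) (q.1, z) - alPsi g x y (b 0) (q.1, z))
      ((b 1 + (-(∑ j, b j) + 2 * ∑ i, x i q) - alPsi g x y (b 1) q ^ 2) - (b 0 + (-(∑ j, b j) + 2 * ∑ i, x i q) - alPsi g x y (b 0) q ^ 2)) q.2 :=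
    fun q hq => (hψ2S q hq).sub (hψ1S q hq)
  have hdS2 : ∀ q ∈ U, dS (dS (fun q' => α₂ q' / α₁ q')) q = (fun q : ℂ × ℂ => ((b 1 + (-(∑ j, b j) + 2 * ∑ i, x i q) - alPsi g x y (b 1) q ^ 2) - (b 0 + (-(∑ j, b j) + 2 * ∑ i, x i q) - alPsi g x y (b 0) q ^ 2)) * (α₂ q / α₁ q) + (alPsi g x y (b 1) q - alPsi g x y (b 0) q) * ((alPsi g x y (b 1) q - alPsi g x y (b 0) q) * (α₂ q / α₁ q))) q := by
    intro q hq
    have e1 : dS (dS (fun q' => α₂ q' / α₁ q')) q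
        = dS (fun q' => (alPsi g x y (b 1) q' - alPsi g x y (b 0) q') * (α₂ q' / α₁ q')) q :=
      dS_congr hU hdSR hq
    rw [e1]
    refine HasDerivAt.deriv (HasDerivAt_congr_value ((hvS q hq).mul (hRS q hq)) ?_)
    simp only [Prod.mk.eta]
    try ring
  have hσS : HasDerivAt (fun z => ∑ i, x i (p.1, z)) (∑ i, 2 * y i p / alFd g x i p) p.2 :=
    HasDerivAt.fun_sum (fun i _ => hxS hU hx hflowS p hp i)
  have ht2 := (((hσS.const_mul (2 : ℂ)).const_add (-(∑ j, b j))).const_add (b 1)).sub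
    ((hψ2S p hp).pow 2)
  have ht1 := (((hσS.const_mul (2 : ℂ)).const_add (-(∑ j, b j))).const_add (b 0)).sub
    ((hψ1S p hp).pow 2)
  have hW2slice := ((ht2.sub ht1).mul (hRS p hp)).add
    ((hvS p hp).mul ((hvS p hp).mul (hRS p hp)))
  have hdS3 : dS (dS (dS (fun q' => α₂ q' / α₁ q'))) p = ((2 * (∑ i, 2 * y i p / alFd g x i p) - 2 * alPsi g x y (b 1) p * (b 1 + (-(∑ j, b j) + 2 * ∑ i, x i p) - alPsi g x y (b 1) p ^ 2)) - (2 * (∑ i, 2 * y i p / alFd g x i p) - 2 * alPsi g x y (b 0) p * (b 0 + (-(∑ j, b j) + 2 * ∑ i, x i p) - alPsi g x y (b 0) p ^ 2))) * (α₂ p / α₁ p) + 3 * ((b 1 + (-(∑ j, b j) + 2 * ∑ i, x i p) - alPsi g x y (b 1) p ^ 2) - (b 0 + (-(∑ j, b j) + 2 * ∑ i, x i p) - alPsi g x y (b 0) p ^ 2)) * (alPsi g x y (b 1) p - alPsi g x y (b 0) p) * (α₂ p / α₁ p) + (alPsi g x y (b 1) p - alPsi g x y (b 0) p) ^ 3 *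 (α₂ p / α₁ p) := by
    have e1 : dS (dS (dS (fun q' => α₂ q' / α₁ q'))) p = dS (fun q : ℂ × ℂ => ((b 1 + (-(∑ j, b j) + 2 * ∑ i, x i q) - alPsi g x y (b 1) q ^ 2) - (b 0 + (-(∑ j, b j) + 2 * ∑ i, x i q) - alPsi g x y (b 0) q ^ 2)) * (α₂ q / α₁ q) + (alPsi g x y (b 1) q - alPsi g x y (b 0) q) * ((alPsi g x y (b 1) q - alPsi g x y (b 0) q) * (α₂ q / α₁ q))) p :=
      dS_congr hU hdS2 hp
    rw [e1]
    refine HasDerivAt.deriv (HasDerivAt_congr_value hW2slice ?_)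
    simp only [Prod.mk.eta, Pi.sub_apply, Pi.mul_apply, Pi.pow_apply]
    push_cast
    ring
  have hdTR : dT (fun q' => α₂ q' / α₁ q') p
      = (((b 1 - ∑ l, x l p) * alPsi g x y (b 1) p + ∑ i, y i p / alFd g x i p)
          - ((b 0 - ∑ l, x l p) * alPsi g x y (b 0) p + ∑ i, y i p / alFd g x i p))
        * (α₂ p / α₁ p) := by
    refine HasDerivAt.deriv (HasDerivAt_congr_value
      ((hα2T p hp).div (hα1T p hp) (hα₁ne p hp)) ?_)
    simp only [Prod.mk.eta]
    field_simp [hα₁ne p hp]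
  rw [hdTR, hdSR p hp, hdS3]
  ring
end
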